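/- Let (M,d) be a metric space in which closed bounded sets are compact, μ a Borel probability measure, and ρ : [0,∞) → [0,∞) continuous and non-decreasing with ρ(0)=0 and lim_{t→∞} ρ(t) = ∞. Suppose F(m) = ∫ ρ(d(x,m)) dμ(x) is finite for all m ∈ M and F is not constant. Then the set of minimizers of F is nonempty. -/

import Mathlib

open MeasureTheory Set Filter Topology

/-- Existence of population M-estimators (unbounded loss case): in a proper metric space,
for a non-decreasing continuous loss `ρ` with `ρ(0) = 0` and `ρ(t) → ∞`, if the objective
`F(m) = ∫ ρ(d(x,m)) dμ(x)` is finite (integrable) for all `m` and `F` is not constant,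
then `F` attains its minimum. -/
theorem population_M_estimator_exists
    {M : Type*} [MetricSpace M] [ProperSpace M] [MeasurableSpace M] [BorelSpace M]
    (μ : Measure M) [IsProbabilityMeasure μ]
    (ρ : ℝ → ℝ)
    (hmono : MonotoneOn ρ (Ici 0))
    (hcont : ContinuousOn ρ (Ici 0))
    (hρ0 : ρ 0 = 0)
    (hρnonneg : ∀ t ∈ Ici (0:ℝ), 0 ≤ ρ t)
    (htop : Tendsto ρ atTop atTop)
    (F : M → ℝ)
    (hF : ∀ m, F m = ∫ x, ρ (dist x m) ∂μ)
    (hint : ∀ m : M, Integrable (fun x => ρ (dist x m)) μ)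
    (hnotconst : ¬ ∀ m m' : M, F m = F m') :
    ∃ m : M, ∀ m' : M, F m ≤ F m' := by
  classical
  push_neg at hnotconst
  obtain ⟨m₀, -, -⟩ := hnotconst
  have hnn : ∀ (m x : M), 0 ≤ ρ (dist x m) := fun m x => hρnonneg _ dist_nonneg
  have hFnn : ∀ m, 0 ≤ F m := by
    intro m; rw [hF m]; exact integral_nonneg fun x => hnn m x
  have hρcont : ∀ c : M, Continuous fun x : M => ρ (dist x c) := fun c =>
    hcont.comp_continuous (continuous_id.dist continuous_const) fun x => dist_nonneg
  have hρcont2 : ∀ x : M, Continuous fun m' : M => ρ (dist x m') := fun x =>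
    hcont.comp_continuous (continuous_const.dist continuous_id) fun m' => dist_nonneg
  -- a closed ball of positive measure
  obtain ⟨R, hR⟩ : ∃ R : ℕ, 0 < μ (Metric.closedBall m₀ R) := by
    by_contra h
    push_neg at h
    have h0 : μ (⋃ n : ℕ, Metric.closedBall m₀ n) = 0 :=
      measure_iUnion_null fun n => le_antisymm (h n) (by simp)
    rw [Metric.iUnion_closedBall_nat] at h0
    simp [measure_univ] at h0
  set c : ℝ := (μ (Metric.closedBall m₀ (R : ℝ))).toReal with hc
  have hcpos : 0 < c := ENNReal.toReal_pos hR.ne' (measure_ne_top μ _)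
  -- choose a level of coercivity
  obtain ⟨t, ht0, htbig⟩ : ∃ t : ℝ, 0 ≤ t ∧ F m₀ < ρ t * c := by
    obtain ⟨t, h1, h2⟩ := ((htop.eventually_gt_atTop (F m₀ / c)).and
      (eventually_ge_atTop (0 : ℝ))).exists
    exact ⟨t, h2, by rwa [div_lt_iff₀ hcpos] at h1⟩
  set r : ℝ := R + t with hr
  have hr0 : (0:ℝ) ≤ r := by positivity
  have hcoerc : ∀ m : M, m ∉ Metric.closedBall m₀ r → F m₀ < F m := by
    intro m hm
    have hdist : r < dist m m₀ := by
      by_contra h; exact hm (Metric.mem_closedBall.mpr (not_lt.mp h))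
    have key : ∀ x ∈ Metric.closedBall m₀ (R : ℝ), ρ t ≤ ρ (dist x m) := by
      intro x hx
      have hx' : dist x m₀ ≤ R := Metric.mem_closedBall.mp hx
      have h1 : dist m m₀ ≤ dist x m + dist x m₀ := by
        rw [dist_comm x m]; exact dist_triangle m x m₀
      have ht' : t ≤ dist x m := by simp only [hr] at hdist; linarith
      exact hmono ht0 dist_nonneg ht'
    have h1 : ρ t * c ≤ ∫ x in Metric.closedBall m₀ (R : ℝ), ρ (dist x m) ∂μ := by
      have := setIntegral_ge_of_const_le measurableSet_closedBall
        (measure_ne_top μ _) key (hint m).integrableOn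
      rw [smul_eq_mul, mul_comm] at this
      exact this
    have h2 : ∫ x in Metric.closedBall m₀ (R : ℝ), ρ (dist x m) ∂μ ≤ F m := by
      rw [hF m]
      exact setIntegral_le_integral (hint m) (Eventually.of_forall (hnn m))
    linarith
  -- minimize over the compact ball
  set K := Metric.closedBall m₀ r with hK
  have hKc : IsCompact K := isCompact_closedBall m₀ r
  have hm₀K : m₀ ∈ K := Metric.mem_closedBall_self hr0
  have hKne : (F '' K).Nonempty := ⟨F m₀, m₀, hm₀K, rfl⟩
  have hbdd : BddBelow (F '' K) := ⟨0, fun y ⟨m', _, hm'⟩ => hm' ▸ hFnn m'⟩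
  set I := sInf (F '' K) with hI
  have hseq : ∀ n : ℕ, ∃ m' ∈ K, F m' < I + 1 / ((n : ℝ) + 1) := by
    intro n
    have hlt : I < I + 1 / ((n : ℝ) + 1) := by
      have : (0:ℝ) < 1 / ((n : ℝ) + 1) := by positivity
      linarith
    obtain ⟨y, ⟨m', hm'K, rfl⟩, hy⟩ := exists_lt_of_csInf_lt hKne hlt
    exact ⟨m', hm'K, hy⟩
  choose u huK hu using hseq
  obtain ⟨m, hmK, φ, hφ, hconv⟩ := hKc.tendsto_subseq huK
  have hlo : ∀ n, I ≤ F (u (φ n)) := fun n => csInf_le hbdd ⟨_, huK _, rfl⟩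
  have hto : Tendsto (fun n => F (u (φ n))) atTop (𝓝 I) := by
    have hup : Tendsto (fun n : ℕ => I + 1 / ((φ n : ℝ) + 1)) atTop (𝓝 I) := by
      have h1 : Tendsto (fun n : ℕ => 1 / ((φ n : ℝ) + 1)) atTop (𝓝 0) :=
        tendsto_one_div_add_atTop_nhds_zero_nat.comp hφ.tendsto_atTop
      simpa using tendsto_const_nhds.add h1
    exact tendsto_of_tendsto_of_tendsto_of_le_of_le tendsto_const_nhds hup hlo
      fun n => (hu (φ n)).le
  have hI0 : 0 ≤ I := le_csInf hKne fun y ⟨m', _, h⟩ => h ▸ hFnn m'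
  -- Fatou: F m ≤ I
  have hFm : F m ≤ I := by
    have heq : ∀ m' : M, ENNReal.ofReal (F m') = ∫⁻ x, ENNReal.ofReal (ρ (dist x m')) ∂μ := by
      intro m'
      rw [hF m']
      exact ofReal_integral_eq_lintegral_ofReal (hint m') (Eventually.of_forall (hnn m'))
    have hmeas : ∀ k : ℕ, Measurable fun x => ENNReal.ofReal (ρ (dist x (u (φ k)))) :=
      fun k => ENNReal.measurable_ofReal.comp (hρcont _).measurable
    have hFatou := lintegral_liminf_le hmeas (μ := μ) (u := atTop)
    have hptw : ∀ x : M, liminf (fun k => ENNReal.ofReal (ρ (dist x (u (φ k))))) atTop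
        = ENNReal.ofReal (ρ (dist x m)) := by
      intro x
      apply Filter.Tendsto.liminf_eq
      exact (ENNReal.continuous_ofReal.tendsto _).comp (((hρcont2 x).tendsto m).comp hconv)
    have h1 : ENNReal.ofReal (F m) ≤ liminf (fun k => ENNReal.ofReal (F (u (φ k)))) atTop := by
      rw [heq m]
      calc ∫⁻ x, ENNReal.ofReal (ρ (dist x m)) ∂μ
          = ∫⁻ x, liminf (fun k => ENNReal.ofReal (ρ (dist x (u (φ k))))) atTop ∂μ := by
            exact lintegral_congr fun x => (hptw x).symm
        _ ≤ liminf (fun k => ∫⁻ x, ENNReal.ofReal (ρ (dist x (u (φ k)))) ∂μ) atTop := hFatou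
        _ = liminf (fun k => ENNReal.ofReal (F (u (φ k)))) atTop := by
            exact liminf_congr (Eventually.of_forall fun k => (heq _).symm)
    have h2 : liminf (fun k => ENNReal.ofReal (F (u (φ k)))) atTop = ENNReal.ofReal I :=
      ((ENNReal.continuous_ofReal.tendsto _).comp hto).liminf_eq
    rw [h2] at h1
    exact (ENNReal.ofReal_le_ofReal_iff hI0).mp h1
  refine ⟨m, fun m' => ?_⟩
  by_cases hm' : m' ∈ K
  · exact hFm.trans (csInf_le hbdd ⟨m', hm', rfl⟩)
  · exact hFm.trans ((csInf_le hbdd ⟨m₀, hm₀K, rfl⟩).trans (hcoerc m' hm').le)
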